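/- Let a = (a₁,…,aₙ) and b = (b₁,…,bₙ) be distinct decreasing vectors of nonnegative real numbers. If [x^b]_{Sₙ} ≤ [x^a]_{Sₙ} for every positive vector x ∈ ℝⁿ, then b is strictly majorized by a: Σ_{i=1}^k b_i ≤ Σ_{i=1}^k a_i for all k ∈ {1,…,n−1} and Σ_{i=1}^n b_i = Σ_{i=1}^n a_i. -/

import Mathlib

open Finset

lemma le_val_of_strictMono {k n : ℕ} (f : Fin k → Fin n) (hf : StrictMono f) :
    ∀ j : Fin k, (j : ℕ) ≤ (f j : ℕ) := by
  intro j
  induction' hj : (j : ℕ) with m ih generalizing j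
  · exact Nat.zero_le _
  · have hm : m < k := by omega
    have h1 : (m : ℕ) ≤ (f ⟨m, hm⟩ : ℕ) := ih ⟨m, hm⟩ rfl
    have h2 : f ⟨m, hm⟩ < f j := hf (by simp [Fin.lt_def, hj])
    have := Fin.lt_def.mp h2
    omega

lemma filter_lt_eq_map {n k : ℕ} (hk : k ≤ n) :
    (univ.filter (fun i : Fin n => (i : ℕ) < k)) = Finset.map (Fin.castLEEmb hk) univ := by
  ext i
  simp only [mem_filter, mem_univ, true_and, Finset.mem_map]
  constructor
  · intro h
    exact ⟨⟨i, h⟩, by simp [Fin.castLEEmb, Fin.ext_iff]⟩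
  · rintro ⟨j, rfl⟩
    simpa [Fin.castLEEmb] using j.2

lemma card_filter_lt_eq {n k : ℕ} (hk : k ≤ n) :
    (univ.filter (fun i : Fin n => (i : ℕ) < k)).card = k := by
  rw [filter_lt_eq_map hk, Finset.card_map, Finset.card_univ, Fintype.card_fin]

lemma sum_eq_sum_orderEmb {n k : ℕ} (a : Fin n → ℝ) (S : Finset (Fin n)) (hS : S.card = k) :
    ∑ i ∈ S, a i = ∑ j : Fin k, a (S.orderEmbOfFin hS j) := by
  have himg : Finset.image (S.orderEmbOfFin hS) univ = S := by
    ext x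
    simp only [mem_image, mem_univ, true_and]
    rw [← Finset.mem_coe, ← Finset.range_orderEmbOfFin S hS]
    constructor
    · rintro ⟨j, rfl⟩; exact ⟨j, rfl⟩
    · rintro ⟨j, rfl⟩; exact ⟨j, rfl⟩
  have := Finset.sum_image (f := fun i => a i) (g := S.orderEmbOfFin hS) (s := univ)
    (fun x _ y _ h => (S.orderEmbOfFin hS).injective h)
  rw [himg] at this
  exact this

lemma sum_subset_le_sum_first {n k : ℕ} (hk : k ≤ n) (a : Fin n → ℝ) (ha : Antitone a)
    (S : Finset (Fin n)) (hS : S.card = k) :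
    ∑ i ∈ S, a i ≤ ∑ i ∈ univ.filter (fun i : Fin n => (i : ℕ) < k), a i := by
  rw [sum_eq_sum_orderEmb a S hS, filter_lt_eq_map hk, Finset.sum_map]
  apply Finset.sum_le_sum
  intro j _
  apply ha
  have h3 : (j : ℕ) ≤ (S.orderEmbOfFin hS j : ℕ) :=
    le_val_of_strictMono _ (OrderEmbedding.strictMono _) j
  rw [Fin.le_def]
  simpa [Fin.castLEEmb] using h3

theorem stmt_11 (n : ℕ) (a b : Fin n → ℝ)
    (ha0 : ∀ i, 0 ≤ a i) (hb0 : ∀ i, 0 ≤ b i)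
    (ha : Antitone a) (hb : Antitone b) (hne : b ≠ a)
    (hle : ∀ x : Fin n → ℝ, (∀ i, 0 < x i) →
      (1 / (Nat.factorial n : ℝ)) * ∑ σ : Equiv.Perm (Fin n), ∏ i, x (σ i) ^ b i
        ≤ (1 / (Nat.factorial n : ℝ)) * ∑ σ : Equiv.Perm (Fin n), ∏ i, x (σ i) ^ a i) :
    (∀ k : ℕ, k < n →
      ∑ i ∈ Finset.univ.filter (fun i : Fin n => (i : ℕ) < k), b i
        ≤ ∑ i ∈ Finset.univ.filter (fun i : Fin n => (i : ℕ) < k), a i)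
      ∧ ∑ i, b i = ∑ i, a i := by
  have hfac : (0 : ℝ) < (n.factorial : ℝ) := by
    exact_mod_cast n.factorial_pos
  have hle' : ∀ x : Fin n → ℝ, (∀ i, 0 < x i) →
      ∑ σ : Equiv.Perm (Fin n), ∏ i, x (σ i) ^ b i
        ≤ ∑ σ : Equiv.Perm (Fin n), ∏ i, x (σ i) ^ a i := by
    intro x hx
    have h := hle x hx
    rwa [mul_le_mul_iff_right₀ (by positivity)] at h
  constructor
  · -- partial sums
    intro k hk
    by_contra hAB
    push_neg at hAB
    set A := ∑ i ∈ Finset.univ.filter (fun i : Fin n => (i : ℕ) < k), a i with hA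
    set B := ∑ i ∈ Finset.univ.filter (fun i : Fin n => (i : ℕ) < k), b i with hB
    have hBA : 0 < B - A := by linarith
    set t : ℝ := ((n.factorial : ℝ) + 1) ^ ((B - A)⁻¹) with ht
    have ht1 : 1 < t := by
      rw [ht, Real.one_lt_rpow_iff_of_pos (by linarith)]
      left
      exact ⟨by linarith, by positivity⟩
    have ht0 : 0 < t := lt_trans one_pos ht1
    have htBA : t ^ (B - A) = (n.factorial : ℝ) + 1 := by
      rw [ht, ← Real.rpow_mul (by linarith), inv_mul_cancel₀ (ne_of_gt hBA), Real.rpow_one]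
    set x : Fin n → ℝ := fun i => if (i : ℕ) < k then t else 1 with hxdef
    have hx : ∀ i, 0 < x i := by
      intro i
      rw [hxdef]
      dsimp only
      split_ifs
      · exact ht0
      · exact one_pos
    have hprod : ∀ (c : Fin n → ℝ) (σ : Equiv.Perm (Fin n)),
        (∏ i, x (σ i) ^ c i)
          = t ^ (∑ i ∈ Finset.univ.filter (fun i => ((σ i : Fin n) : ℕ) < k), c i) := by
      intro c σ
      rw [Real.rpow_sum_of_pos ht0, Finset.prod_filter]
      apply Finset.prod_congr rfl
      intro i _
      by_cases h : ((σ i : Fin n) : ℕ) < k <;> simp [hxdef, h, Real.one_rpow]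
    have hcard : ∀ σ : Equiv.Perm (Fin n),
        (Finset.univ.filter (fun i => ((σ i : Fin n) : ℕ) < k)).card = k := by
      intro σ
      have hb2 : (Finset.univ.filter (fun i => ((σ i : Fin n) : ℕ) < k)).card
          = (Finset.univ.filter (fun i : Fin n => (i : ℕ) < k)).card := by
        apply Finset.card_bij (fun i _ => σ i)
        · intro i hi; simp only [mem_filter, mem_univ, true_and] at hi ⊢; exact hi
        · intro i _ j _ h; exact σ.injective h
        · intro j hj
          refine ⟨σ.symm j, ?_, by simp⟩
          simp only [mem_filter, mem_univ, true_and] at hj ⊢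
          simpa using hj
      rw [hb2, card_filter_lt_eq hk.le]
    have key := hle' x hx
    have hlhs : t ^ B ≤ ∑ σ : Equiv.Perm (Fin n), ∏ i, x (σ i) ^ b i := by
      have h1 : (∏ i, x ((1 : Equiv.Perm (Fin n)) i) ^ b i) = t ^ B := by
        rw [hprod b 1, hB]
        congr 1
      calc t ^ B = ∏ i, x ((1 : Equiv.Perm (Fin n)) i) ^ b i := h1.symm
        _ ≤ _ := by
          apply Finset.single_le_sum (f := fun σ : Equiv.Perm (Fin n) => ∏ i, x (σ i) ^ b i)
            ?_ (mem_univ 1)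
          intro σ _
          exact Finset.prod_nonneg fun i _ => Real.rpow_nonneg (le_of_lt (hx _)) _
    have hrhs : ∑ σ : Equiv.Perm (Fin n), ∏ i, x (σ i) ^ a i
        ≤ (n.factorial : ℝ) * t ^ A := by
      calc ∑ σ : Equiv.Perm (Fin n), ∏ i, x (σ i) ^ a i
          ≤ ∑ _σ : Equiv.Perm (Fin n), t ^ A := by
            apply Finset.sum_le_sum
            intro σ _
            rw [hprod a σ]
            apply Real.rpow_le_rpow_of_exponent_le ht1.le
            exact sum_subset_le_sum_first hk.le a ha _ (hcard σ)
        _ = (n.factorial : ℝ) * t ^ A := by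
            rw [Finset.sum_const, Finset.card_univ, Fintype.card_perm, Fintype.card_fin,
              nsmul_eq_mul]
    have hfinal : t ^ B ≤ (n.factorial : ℝ) * t ^ A := le_trans (le_trans hlhs key) hrhs
    have hexp : t ^ B = ((n.factorial : ℝ) + 1) * t ^ A := by
      have : B = (B - A) + A := by ring
      rw [this, Real.rpow_add ht0, htBA]
    have hApos : 0 < t ^ A := Real.rpow_pos_of_pos ht0 A
    rw [hexp] at hfinal
    have := (mul_le_mul_iff_left₀ hApos).mp hfinal
    linarith
  · -- total sums
    have h2 : ∀ t : ℝ, 0 < t → t ^ (∑ i, b i) ≤ t ^ (∑ i, a i) := by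
      intro t htp
      have h := hle' (fun _ => t) (fun _ => htp)
      simp only [← Real.rpow_sum_of_pos htp] at h
      rw [Finset.sum_const, Finset.sum_const, Finset.card_univ, Fintype.card_perm,
        Fintype.card_fin, nsmul_eq_mul, nsmul_eq_mul] at h
      exact le_of_mul_le_mul_left h hfac
    have le1 : ∑ i, b i ≤ ∑ i, a i :=
      (Real.rpow_le_rpow_left_iff one_lt_two).mp (h2 2 two_pos)
    have le2 : ∑ i, a i ≤ ∑ i, b i :=
      (Real.rpow_le_rpow_left_iff_of_base_lt_one (by norm_num) (by norm_num : (1:ℝ)/2 < 1)).mp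
        (h2 (1/2) (by norm_num))
    linarith
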